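/- Let 1 ≤ m ≤ n be integers and let w₁, ..., wₙ ∈ [0,1] be real numbers with w₁ + ... + wₙ = m. Then |Σ_{j=1}^{n} wⱼ · e(j/n)| ≤ |Σ_{j=1}^{m} e(j/n)|, where e(t) = exp(2πit). -/

import Mathlib

open Complex

section Aux

open Finset

private lemma periodic_shift' (n : ℕ) (hn : 0 < n) (a : ℤ) (f : ℤ → ℝ)
    (hf : ∀ j : ℤ, f (j + n) = f j) :
    ∑ j ∈ Ioc a (a + n), f j = ∑ j ∈ Ioc (0:ℤ) n, f j := by
  have hper : ∀ (t : ℤ) (j : ℤ), f (j + n * t) = f j := by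
    intro t
    induction t using Int.induction_on with
    | zero => simp
    | succ k ih => intro j
                   have h1 : j + (n:ℤ) * (k + 1) = (j + n * k) + n := by ring
                   rw [h1, hf, ih]
    | pred k ih => intro j
                   have h1 : (j + (n:ℤ) * (-k - 1)) + n = j + n * (-k) := by ring
                   have h2 := hf (j + n * (-k - 1))
                   rw [h1] at h2
                   rw [← h2]; exact ih j
  have hn' : (0:ℤ) < n := by exact_mod_cast hn
  have hnz : (n:ℤ) ≠ 0 := by omega
  refine Finset.sum_nbij' (fun j => (j - 1) % n + 1) (fun k => a + 1 + (k - a - 1) % n) ?_ ?_ ?_ ?_ ?_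
  · intro j hj
    simp only [mem_Ioc] at *
    have := Int.emod_nonneg (j - 1) hnz
    have := Int.emod_lt_of_pos (j - 1) hn'
    omega
  · intro k hk
    simp only [mem_Ioc] at *
    have := Int.emod_nonneg (k - a - 1) hnz
    have := Int.emod_lt_of_pos (k - a - 1) hn'
    omega
  · intro j hj
    simp only [mem_Ioc] at hj
    have hd := Int.emod_add_mul_ediv (j - 1) n
    have key : ((j - 1) % n + 1 - a - 1) % n = j - 1 - a := by
      have h1 : (j - 1) % n + 1 - a - 1 = (j - 1 - a) + (n:ℤ) * (-((j-1)/n)) := by rw [mul_neg]; omega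
      rw [h1, Int.add_mul_emod_self_left, Int.emod_eq_of_lt (by omega) (by omega)]
    beta_reduce
    omega
  · intro k hk
    simp only [mem_Ioc] at hk
    have hd := Int.emod_add_mul_ediv (k - a - 1) n
    have key : (a + 1 + (k - a - 1) % n - 1) % n = k - 1 := by
      have h1 : a + 1 + (k - a - 1) % n - 1 = (k - 1) + (n:ℤ) * (-((k-a-1)/n)) := by rw [mul_neg]; omega
      rw [h1, Int.add_mul_emod_self_left, Int.emod_eq_of_lt (by omega) (by omega)]
    beta_reduce
    omega
  · intro j hj
    simp only [mem_Ioc] at hj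
    have hd := Int.emod_add_mul_ediv (j - 1) n
    have h1 : j = ((j - 1) % n + 1) + n * ((j-1)/n) := by omega
    conv_lhs => rw [h1]
    rw [hper]

private lemma exchange' (a : ℤ) (m n : ℕ) (hmn : m ≤ n) (t c : ℤ → ℝ) (lam : ℝ)
    (ht : ∀ j ∈ Ioc a (a + (n:ℤ)), t j ∈ Set.Icc (0:ℝ) 1)
    (hsum : ∑ j ∈ Ioc a (a + (n:ℤ)), t j = m)
    (hB : ∀ j ∈ Ioc a (a + (m:ℤ)), lam ≤ c j)
    (hC : ∀ j ∈ Ioc (a + (m:ℤ)) (a + (n:ℤ)), c j ≤ lam) :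
    ∑ j ∈ Ioc a (a + (n:ℤ)), t j * c j ≤ ∑ j ∈ Ioc a (a + (m:ℤ)), c j := by
  have h1 : a ≤ a + (m:ℤ) := by omega
  have h2 : a + (m:ℤ) ≤ a + (n:ℤ) := by
    have : (m:ℤ) ≤ n := by exact_mod_cast hmn
    omega
  have hsplit : ∀ g : ℤ → ℝ, ∑ j ∈ Ioc a (a + (n:ℤ)), g j
      = ∑ j ∈ Ioc a (a + (m:ℤ)), g j + ∑ j ∈ Ioc (a + (m:ℤ)) (a + (n:ℤ)), g j := by
    intro g
    rw [← Finset.Ioc_union_Ioc_eq_Ioc h1 h2,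
      Finset.sum_union (by
        rw [Finset.disjoint_left]
        intro x hx hx'
        simp only [mem_Ioc] at hx hx'
        omega)]
  have hcardB : (Ioc a (a + (m:ℤ))).card = m := by
    rw [Int.card_Ioc]; simp
  have e1 : ∑ j ∈ Ioc a (a + (m:ℤ)), (t j * c j - c j) ≤ ∑ j ∈ Ioc a (a + (m:ℤ)), (t j - 1) * lam := by
    apply Finset.sum_le_sum
    intro j hj
    have htj := ht j (Finset.mem_of_subset (Finset.Ioc_subset_Ioc le_rfl h2) hj)
    have := hB j hj
    nlinarith [htj.1, htj.2]
  have e2 : ∑ j ∈ Ioc (a + (m:ℤ)) (a + (n:ℤ)), t j * c j ≤ ∑ j ∈ Ioc (a + (m:ℤ)) (a + (n:ℤ)), t j * lam := by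
    apply Finset.sum_le_sum
    intro j hj
    have htj := ht j (Finset.mem_of_subset (Finset.Ioc_subset_Ioc (by omega) le_rfl) hj)
    have := hC j hj
    nlinarith [htj.1, htj.2]
  have e3 : ∑ j ∈ Ioc a (a + (m:ℤ)), (t j - 1) * lam + ∑ j ∈ Ioc (a + (m:ℤ)) (a + (n:ℤ)), t j * lam = 0 := by
    have expand1 : ∑ j ∈ Ioc a (a + (m:ℤ)), (t j - 1) * lam
        = (∑ j ∈ Ioc a (a + (m:ℤ)), t j) * lam - m * lam := by
      have hr : ∀ j : ℤ, (t j - 1) * lam = t j * lam - lam := fun j => by ring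
      simp_rw [hr, Finset.sum_sub_distrib, Finset.sum_const, hcardB, nsmul_eq_mul, Finset.sum_mul]
    have expand2 : ∑ j ∈ Ioc (a + (m:ℤ)) (a + (n:ℤ)), t j * lam
        = (∑ j ∈ Ioc (a + (m:ℤ)) (a + (n:ℤ)), t j) * lam := by
      rw [← Finset.sum_mul]
    rw [expand1, expand2]
    have := hsplit t
    rw [this] at hsum
    linear_combination lam * hsum
  have expand : ∑ j ∈ Ioc a (a + (m:ℤ)), (t j * c j - c j)
      = ∑ j ∈ Ioc a (a + (m:ℤ)), t j * c j - ∑ j ∈ Ioc a (a + (m:ℤ)), c j :=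
    Finset.sum_sub_distrib _ _
  have := hsplit (fun j => t j * c j)
  linarith [e1, e2, e3, expand, this]

private lemma angles' (m n : ℕ) (hm : 1 ≤ m) (hmn : m ≤ n) (θ : ℝ) (a : ℤ)
    (ha : a = ⌊(n:ℝ)*θ/(2*Real.pi) - m/2⌋) :
    (∀ j ∈ Finset.Ioc a (a+(m:ℤ)), Real.cos (Real.pi*m/n) ≤ Real.cos (2*Real.pi*j/n - θ)) ∧
    (∀ j ∈ Finset.Ioc (a+(m:ℤ)) (a+(n:ℤ)), Real.cos (2*Real.pi*j/n - θ) ≤ Real.cos (Real.pi*m/n)) := by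
  have hπ := Real.pi_pos
  have hn0 : (0:ℝ) < n := by exact_mod_cast (by omega : 0 < n)
  have h2π : (0:ℝ) < 2*Real.pi := by positivity
  have hfl : (a:ℝ) ≤ (n:ℝ)*θ/(2*Real.pi) - m/2 := ha ▸ Int.floor_le _
  have hfl2 : (n:ℝ)*θ/(2*Real.pi) - m/2 < a + 1 := ha ▸ Int.lt_floor_add_one _
  have hcan : ((n:ℝ)*θ/(2*Real.pi))*(2*Real.pi) = n*θ := div_mul_cancel₀ _ (ne_of_gt h2π)
  have key1 : 2*Real.pi*a ≤ n*θ - Real.pi*m := by nlinarith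
  have key2 : n*θ - Real.pi*m < 2*Real.pi*(a+1) := by nlinarith
  have hmn' : (m:ℝ) ≤ n := by exact_mod_cast hmn
  have hmπ : Real.pi*m/n ≤ Real.pi := by
    rw [div_le_iff₀ hn0]; nlinarith
  have hmπ0 : 0 ≤ Real.pi*m/n := by positivity
  constructor
  · intro j hj
    simp only [Finset.mem_Ioc] at hj
    have hj1 : (a:ℝ)+1 ≤ j := by exact_mod_cast hj.1
    have hj2 : (j:ℝ) ≤ (a:ℝ) + m := by exact_mod_cast hj.2
    have hx : 2*Real.pi*(j:ℝ)/n - θ = (2*Real.pi*j - n*θ)/n := by field_simp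
    have hlow : -(Real.pi*m/n) ≤ 2*Real.pi*(j:ℝ)/n - θ := by
      rw [hx, ← neg_div]
      gcongr
      nlinarith
    have hhigh : 2*Real.pi*(j:ℝ)/n - θ ≤ Real.pi*m/n := by
      rw [hx]
      gcongr
      nlinarith
    have habs : |2*Real.pi*(j:ℝ)/n - θ| ≤ Real.pi*m/n := abs_le.2 ⟨hlow, hhigh⟩
    calc Real.cos (Real.pi*m/n) ≤ Real.cos |2*Real.pi*(j:ℝ)/n - θ| :=
           Real.cos_le_cos_of_nonneg_of_le_pi (abs_nonneg _) hmπ habs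
      _ = _ := Real.cos_abs _
  · intro j hj
    simp only [Finset.mem_Ioc] at hj
    have hj1 : (a:ℝ)+(m:ℝ)+1 ≤ j := by
      have : a + (m:ℤ) + 1 ≤ j := by omega
      exact_mod_cast this
    have hj2 : (j:ℝ) ≤ (a:ℝ) + n := by exact_mod_cast hj.2
    have hx : 2*Real.pi*(j:ℝ)/n - θ = (2*Real.pi*j - n*θ)/n := by field_simp
    have hlow : Real.pi*m/n ≤ 2*Real.pi*(j:ℝ)/n - θ := by
      rw [hx]
      gcongr
      nlinarith
    have hhigh : 2*Real.pi*(j:ℝ)/n - θ ≤ 2*Real.pi - Real.pi*m/n := by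
      rw [hx, show 2*Real.pi - Real.pi*m/n = (2*Real.pi*n - Real.pi*m)/n by field_simp,
        div_le_div_iff_of_pos_right hn0]
      nlinarith
    set x := 2*Real.pi*(j:ℝ)/n - θ with hxdef
    by_cases hc : x ≤ Real.pi
    · exact Real.cos_le_cos_of_nonneg_of_le_pi hmπ0 hc hlow
    · push_neg at hc
      have hrw : Real.cos x = Real.cos (2*Real.pi - x) := by
        rw [show 2*Real.pi - x = -(x - 2*Real.pi) by ring, Real.cos_neg, Real.cos_sub_two_pi]
      rw [hrw]
      exact Real.cos_le_cos_of_nonneg_of_le_pi hmπ0 (by linarith) (by linarith)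

private lemma cast_sum_lemma' {M : Type*} [AddCommMonoid M] (n : ℕ) (g : ℤ → M) :
    ∑ k ∈ Finset.Icc 1 n, g (k:ℤ) = ∑ j ∈ Finset.Ioc (0:ℤ) (n:ℤ), g j := by
  refine Finset.sum_nbij' (fun k => (k:ℤ)) (fun j => j.toNat) ?_ ?_ ?_ ?_ ?_
  · intro k hk; simp only [Finset.mem_Icc, Finset.mem_Ioc] at *; omega
  · intro j hj; simp only [Finset.mem_Icc, Finset.mem_Ioc] at *; omega
  · intro k hk; simp
  · intro j hj; simp only [Finset.mem_Ioc] at hj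
    show ((j.toNat : ℤ)) = j
    omega
  · intro k hk; rfl

private lemma norm_eq_re' (θ : ℝ) (S : ℂ) (hθ : θ = S.arg) :
    ‖S‖ = (Complex.exp (-(θ:ℂ) * Complex.I) * S).re := by
  have habs : (‖S‖ : ℂ) * Complex.exp ((θ:ℂ) * Complex.I) = S := by
    rw [hθ]; exact Complex.norm_mul_exp_arg_mul_I S
  have key : Complex.exp (-(θ:ℂ) * Complex.I) * S = (‖S‖ : ℂ) := by
    rw [← habs, ← mul_assoc, mul_comm (Complex.exp _), mul_assoc, ← Complex.exp_add]
    ring_nf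
    simp
  rw [key]
  simp

private lemma re_term' (n : ℕ) (θ wj x : ℝ) (hn : 0 < n) :
    (Complex.exp (-(θ:ℂ) * Complex.I) * ((wj:ℂ) * Complex.exp (2 * Real.pi * Complex.I * ((x:ℂ) / n)))).re
      = wj * Real.cos (2*Real.pi*x/n - θ) := by
  have h1 : Complex.exp (-(θ:ℂ) * Complex.I) * ((wj:ℂ) * Complex.exp (2 * Real.pi * Complex.I * ((x:ℂ) / n)))
      = (wj:ℂ) * Complex.exp (((2*Real.pi*x/n - θ : ℝ) : ℂ) * Complex.I) := by
    rw [mul_comm (Complex.exp _), mul_assoc, ← Complex.exp_add]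
    congr 1
    have hn' : (n:ℂ) ≠ 0 := by exact_mod_cast (by positivity : (n:ℝ) ≠ 0)
    push_cast
    field_simp
    ring
  rw [h1, Complex.re_ofReal_mul, Complex.exp_ofReal_mul_I_re]

end Aux

theorem stmt_3 (m n : ℕ) (hm : 1 ≤ m) (hmn : m ≤ n) (w : ℕ → ℝ)
    (hw : ∀ j ∈ Finset.Icc 1 n, w j ∈ Set.Icc (0 : ℝ) 1)
    (hsum : ∑ j ∈ Finset.Icc 1 n, w j = m) :
    ‖∑ j ∈ Finset.Icc 1 n, (w j : ℂ) * Complex.exp (2 * Real.pi * Complex.I * (j / n))‖ ≤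
      ‖∑ j ∈ Finset.Icc 1 m, Complex.exp (2 * Real.pi * Complex.I * (j / n))‖ := by
  have hn : 0 < n := le_trans hm hmn
  set S : ℂ := ∑ j ∈ Finset.Icc 1 n, (w j : ℂ) * Complex.exp (2 * Real.pi * Complex.I * (j / n)) with hSdef
  by_cases hS0 : S = 0
  · rw [hS0]
    simp
  set θ : ℝ := S.arg with hθdef
  set a : ℤ := ⌊(n:ℝ)*θ/(2*Real.pi) - (m:ℝ)/2⌋ with hadef
  set c : ℤ → ℝ := fun j => Real.cos (2*Real.pi*(j:ℝ)/n - θ) with hcdef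
  set W : ℤ → ℝ := fun j => w (((j - 1) % (n:ℤ)).toNat + 1) with hWdef
  have hnz : (n:ℤ) ≠ 0 := by omega
  have hnz' : (0:ℤ) < n := by omega
  -- Step 1: norm as real part
  have h1 : ‖S‖ = (Complex.exp (-(θ:ℂ) * Complex.I) * S).re := norm_eq_re' θ S hθdef
  -- Step 2: real part as weighted cosine sum
  have h2 : (Complex.exp (-(θ:ℂ) * Complex.I) * S).re
      = ∑ j ∈ Finset.Icc 1 n, w j * Real.cos (2*Real.pi*(j:ℝ)/n - θ) := by
    rw [hSdef, Finset.mul_sum, Complex.re_sum]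
    refine Finset.sum_congr rfl fun j hj => ?_
    have h := re_term' n θ (w j) (j:ℝ) hn
    push_cast at h ⊢
    exact h
  -- W j matches w j on [1, n]
  have hWw : ∀ k ∈ Finset.Icc 1 n, W (k:ℤ) = w k := by
    intro k hk
    simp only [Finset.mem_Icc] at hk
    have : ((k:ℤ) - 1) % n = (k:ℤ) - 1 := Int.emod_eq_of_lt (by omega) (by omega)
    simp only [hWdef, this]
    congr 1
    omega
  -- Step 3: convert to ℤ-indexed sum
  have h3 : ∑ j ∈ Finset.Icc 1 n, w j * Real.cos (2*Real.pi*(j:ℝ)/n - θ)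
      = ∑ j ∈ Finset.Ioc (0:ℤ) (n:ℤ), W j * c j := by
    rw [← cast_sum_lemma' n (fun j => W j * c j)]
    refine Finset.sum_congr rfl fun k hk => ?_
    rw [hWw k hk]
    simp only [hcdef]
    norm_num
  -- periodicity
  have hWper : ∀ j : ℤ, W (j + n) = W j := by
    intro j
    simp only [hWdef]
    congr 2
    rw [show j + (n:ℤ) - 1 = (j - 1) + (n:ℤ)*1 by ring, Int.add_mul_emod_self_left]
  have hcper : ∀ j : ℤ, c (j + n) = c j := by
    intro j
    simp only [hcdef]
    have hn0 : (n:ℝ) ≠ 0 := by positivity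
    rw [show 2*Real.pi*((j:ℤ):ℝ)/n - θ = (2*Real.pi*(((j + n : ℤ)):ℝ)/n - θ) + (-1:ℤ)*(2*Real.pi) by
      push_cast; field_simp; ring]
    rw [Real.cos_add_int_mul_two_pi]
  -- Step 4: shift window
  have h4 : ∑ j ∈ Finset.Ioc a (a + (n:ℤ)), W j * c j = ∑ j ∈ Finset.Ioc (0:ℤ) (n:ℤ), W j * c j :=
    periodic_shift' n hn a _ (fun j => by rw [hWper, hcper])
  have h4W : ∑ j ∈ Finset.Ioc a (a + (n:ℤ)), W j = ∑ j ∈ Finset.Ioc (0:ℤ) (n:ℤ), W j :=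
    periodic_shift' n hn a W hWper
  -- Step 5: weight sum over window
  have h5 : ∑ j ∈ Finset.Ioc a (a + (n:ℤ)), W j = m := by
    rw [h4W, ← cast_sum_lemma' n W, ← hsum]
    exact Finset.sum_congr rfl hWw
  -- Step 6: weights in [0,1]
  have h6 : ∀ j ∈ Finset.Ioc a (a + (n:ℤ)), W j ∈ Set.Icc (0:ℝ) 1 := by
    intro j _
    apply hw
    simp only [Finset.mem_Icc]
    have := Int.emod_nonneg (j - 1) hnz
    have := Int.emod_lt_of_pos (j - 1) hnz'
    omega
  -- Step 7: angle bounds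
  obtain ⟨hB, hC⟩ := angles' m n hm hmn θ a hadef
  -- Step 8: exchange
  have h8 : ∑ j ∈ Finset.Ioc a (a + (n:ℤ)), W j * c j ≤ ∑ j ∈ Finset.Ioc a (a + (m:ℤ)), c j :=
    exchange' a m n hmn W c (Real.cos (Real.pi*m/n)) h6 h5 hB hC
  -- Step 9: geometric sum bound
  set E : ℤ → ℂ := fun j => Complex.exp (2*Real.pi*Complex.I*((j:ℂ)/n)) with hEdef
  set Z : ℂ := ∑ j ∈ Finset.Ioc a (a + (m:ℤ)), E j with hZdef
  have h9a : ∑ j ∈ Finset.Ioc a (a + (m:ℤ)), c j = (Complex.exp (-(θ:ℂ) * Complex.I) * Z).re := by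
    rw [hZdef, Finset.mul_sum, Complex.re_sum]
    refine Finset.sum_congr rfl fun j hj => ?_
    have h := re_term' n θ 1 (j:ℝ) hn
    push_cast at h
    rw [one_mul, one_mul] at h
    simp only [hcdef, hEdef]
    rw [← h]
  have h9b : (Complex.exp (-(θ:ℂ) * Complex.I) * Z).re ≤ ‖Z‖ := by
    calc (Complex.exp (-(θ:ℂ) * Complex.I) * Z).re ≤ ‖Complex.exp (-(θ:ℂ) * Complex.I) * Z‖ :=
          Complex.re_le_norm _
      _ = ‖Complex.exp (-(θ:ℂ) * Complex.I)‖ * ‖Z‖ := norm_mul _ _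
      _ = ‖Z‖ := by
          rw [Complex.norm_exp]
          simp
  have hEadd : ∀ k : ℤ, E (k + a) = E a * E k := by
    intro k
    simp only [hEdef]
    rw [← Complex.exp_add]
    congr 1
    push_cast
    ring
  have h9c : Z = E a * ∑ k ∈ Finset.Ioc (0:ℤ) (m:ℤ), E k := by
    rw [hZdef, Finset.mul_sum]
    refine Finset.sum_nbij' (fun j => j - a) (fun k => k + a) ?_ ?_ ?_ ?_ ?_
    · intro j hj; simp only [Finset.mem_Ioc] at *; omega
    · intro k hk; simp only [Finset.mem_Ioc] at *; omega
    · intro j hj; simp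
    · intro k hk; simp
    · intro j hj
      rw [show E j = E ((j - a) + a) by norm_num, hEadd]
  have hEa1 : ‖E a‖ = 1 := by
    simp only [hEdef]
    rw [show (2*(Real.pi:ℂ)*Complex.I*((a:ℂ)/n) : ℂ) = ((2*Real.pi*(a:ℝ)/n : ℝ):ℂ) * Complex.I by
      push_cast; ring]
    exact Complex.norm_exp_ofReal_mul_I _
  have h9d : ‖Z‖ = ‖∑ k ∈ Finset.Ioc (0:ℤ) (m:ℤ), E k‖ := by
    rw [h9c]
    simp [map_mul, hEa1]
  have h9e : ∑ k ∈ Finset.Ioc (0:ℤ) (m:ℤ), E k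
      = ∑ j ∈ Finset.Icc 1 m, Complex.exp (2 * Real.pi * Complex.I * ((j:ℂ) / n)) := by
    rw [← cast_sum_lemma' m E]
    refine Finset.sum_congr rfl fun k hk => ?_
    simp only [hEdef]
    norm_num
  rw [h1, h2, h3, ← h4]
  calc ∑ j ∈ Finset.Ioc a (a + (n:ℤ)), W j * c j ≤ ∑ j ∈ Finset.Ioc a (a + (m:ℤ)), c j := h8
    _ = (Complex.exp (-(θ:ℂ) * Complex.I) * Z).re := h9a
    _ ≤ ‖Z‖ := h9b
    _ = ‖∑ k ∈ Finset.Ioc (0:ℤ) (m:ℤ), E k‖ := h9d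
    _ = _ := by rw [h9e]
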